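/- Let k(x) = ∂_t K_t(x) viewed as a function of x ∈ ℝⁿ \ {0} with values in the Hilbert space H = L²((0,∞), t dt), where K_t(x) = t^{-n/2} e^{-π|x|²/t}. Then for every θ ∈ S^{n-1} and every ε > 0, the H-valued integral t ↦ ∫_ε^∞ r^{-d/2 - 1} k(θ/√r)(t) dr/r satisfies ∫_0^∞ |∫_{r > ε} r^{-d/2} k(θ/√r) dr/r|²(t) · t dt = C_d π^{-d}, where C_d = ∫_0^∞ r^{d-1} e^{-2r} dr; in particular the H-norm sup over ε > 0 is bounded by (C_d π^{-d})^{1/2}, uniformly in θ. -/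

import Mathlib

open MeasureTheory Real
open Filter Set Topology

noncomputable def KD (d : ℕ) (t : ℝ) {n : ℕ} (x : EuclideanSpace ℝ (Fin n)) : ℝ :=
  t ^ (-(d : ℝ) / 2) * Real.exp (-π * ‖x‖ ^ 2 / t)

/-- `k(x)(t) = ∂ₜ Kₜ(x)`, an `H = L²((0,∞), t dt)`-valued kernel. -/
noncomputable def kker (d : ℕ) {n : ℕ} (x : EuclideanSpace ℝ (Fin n)) (t : ℝ) : ℝ :=
  deriv (fun s => KD d s x) t

lemma kker_eq (d : ℕ) {n : ℕ} (x : EuclideanSpace ℝ (Fin n)) {t : ℝ} (ht : 0 < t) :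
    kker d x t
      = t ^ (-(d:ℝ)/2 - 1) * ((-(d:ℝ)/2 + π * ‖x‖^2 / t) * Real.exp (-π * ‖x‖^2 / t)) := by
  have h1 : HasDerivAt (fun s : ℝ => s ^ (-(d:ℝ)/2)) (-(d:ℝ)/2 * t ^ (-(d:ℝ)/2 - 1)) t :=
    Real.hasDerivAt_rpow_const (Or.inl ht.ne')
  have h2 : HasDerivAt (fun s : ℝ => -π * ‖x‖^2 / s) (π * ‖x‖^2 / t^2) t := by
    have h2' := (hasDerivAt_inv ht.ne').const_mul (-π * ‖x‖^2)
    have hfe : (fun s : ℝ => -π * ‖x‖^2 / s) = fun s : ℝ => -π * ‖x‖^2 * s⁻¹ := by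
      funext s; rw [div_eq_mul_inv]
    rw [hfe]
    refine h2'.congr_deriv ?_
    ring
  have h4 := h1.mul h2.exp
  have hk : kker d x t
      = -(d:ℝ)/2 * t ^ (-(d:ℝ)/2 - 1) * Real.exp (-π * ‖x‖^2 / t)
        + t ^ (-(d:ℝ)/2) * (Real.exp (-π * ‖x‖^2 / t) * (π * ‖x‖^2 / t^2)) := by
    exact h4.deriv
  rw [hk, Real.rpow_sub_one ht.ne']
  field_simp

lemma absb (c s : ℝ) (hc : 0 ≤ c) (hs : 0 ≤ s) : |(-c + s) * Real.exp (-s)| ≤ c + 1 := by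
  rw [abs_mul, abs_of_pos (Real.exp_pos _)]
  have h1 : |(-c + s)| ≤ c + s := by
    rw [abs_le]; constructor <;> linarith
  have he1 : Real.exp (-s) ≤ 1 := by
    rw [← Real.exp_zero]; exact Real.exp_le_exp.mpr (by linarith)
  have he2 : s * Real.exp (-s) ≤ 1 := by
    rw [Real.exp_neg, ← div_eq_mul_inv]
    exact div_le_one_of_le₀ (by linarith [Real.add_one_le_exp s]) (Real.exp_pos s).le
  calc |(-c + s)| * Real.exp (-s) ≤ (c + s) * Real.exp (-s) :=
        mul_le_mul_of_nonneg_right h1 (Real.exp_pos _).le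
    _ = c * Real.exp (-s) + s * Real.exp (-s) := by ring
    _ ≤ c * 1 + 1 := by
        gcongr
    _ = c + 1 := by ring

lemma inner_int (d : ℕ) (hd1 : 1 ≤ d) {n : ℕ} (θ : EuclideanSpace ℝ (Fin n)) (hθ : ‖θ‖ = 1)
    {ε t : ℝ} (hε : 0 < ε) (ht : 0 < t) :
    ∫ r in Set.Ioi ε, r ^ (-(d:ℝ)/2) * kker d ((Real.sqrt r)⁻¹ • θ) t / r
      = -(t ^ (-(d:ℝ)/2 - 1) * (ε ^ (-(d:ℝ)/2) * Real.exp (-π / (ε * t)))) := by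
  have hd0 : (0:ℝ) < d := by exact_mod_cast Nat.lt_of_lt_of_le Nat.zero_lt_one hd1
  set C : ℝ := t ^ (-(d:ℝ)/2 - 1) with hC
  set F : ℝ → ℝ := fun r =>
    C * (r ^ (-(d:ℝ)/2 - 1) * ((-(d:ℝ)/2 + π / (r*t)) * Real.exp (-π / (r*t)))) with hF
  set g : ℝ → ℝ := fun r => C * (r ^ (-(d:ℝ)/2) * Real.exp (-π / (r*t))) with hg
  have hfe : ∀ r : ℝ, -π / (r * t) = (-π/t) * r⁻¹ := by
    intro r; rw [div_mul_eq_div_div_swap, div_eq_mul_inv]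
  -- congruence of integrands
  have hcongr : Set.EqOn (fun r => r ^ (-(d:ℝ)/2) * kker d ((Real.sqrt r)⁻¹ • θ) t / r) F
      (Set.Ioi ε) := by
    intro r hr
    have hr0 : 0 < r := hε.trans hr
    have hnorm : ‖(Real.sqrt r)⁻¹ • θ‖ ^ 2 = r⁻¹ := by
      rw [norm_smul, hθ, mul_one, norm_inv, Real.norm_eq_abs,
        abs_of_nonneg (Real.sqrt_nonneg r), inv_pow, Real.sq_sqrt hr0.le]
    have e1 : -π * r⁻¹ / t = -π / (r * t) := by
      rw [← div_eq_mul_inv, div_div]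
    have e2 : π * r⁻¹ / t = π / (r * t) := by
      rw [← div_eq_mul_inv, div_div]
    simp only [hF, hC]
    rw [kker_eq d _ ht, hnorm, e1, e2, Real.rpow_sub_one hr0.ne']
    ring
  -- derivative
  have hderiv : ∀ r ∈ Set.Ioi ε, HasDerivAt g (F r) r := by
    intro r hr
    have hr0 : 0 < r := hε.trans hr
    have h1 : HasDerivAt (fun r : ℝ => r ^ (-(d:ℝ)/2)) (-(d:ℝ)/2 * r ^ (-(d:ℝ)/2 - 1)) r :=
      Real.hasDerivAt_rpow_const (Or.inl hr0.ne')
    have h2 : HasDerivAt (fun r : ℝ => -π / (r*t)) (π / (r^2*t)) r := by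
      have h2' := (hasDerivAt_inv hr0.ne').const_mul (-π/t)
      have : (fun r : ℝ => -π / (r*t)) = fun r : ℝ => (-π/t) * r⁻¹ := funext hfe
      rw [this]
      refine h2'.congr_deriv ?_
      ring
    have h3 := (h1.mul h2.exp).const_mul C
    refine h3.congr_deriv ?_
    simp only [hF, hC]
    rw [Real.rpow_sub_one hr0.ne']
    field_simp
  -- integrability of F
  have hexp : -(d:ℝ)/2 - 1 < -1 := by linarith
  have hBint : IntegrableOn (fun r : ℝ => |C| * ((d:ℝ)/2 + 1) * r ^ (-(d:ℝ)/2 - 1))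
      (Set.Ioi ε) := (integrableOn_Ioi_rpow_of_lt hexp hε).const_mul _
  have hFcont : ContinuousOn F (Set.Ioi ε) := by
    intro r hr
    have hr0 : 0 < r := hε.trans hr
    apply ContinuousAt.continuousWithinAt
    have c1 : ContinuousAt (fun r : ℝ => r ^ (-(d:ℝ)/2 - 1)) r :=
      Real.continuousAt_rpow_const _ _ (Or.inl hr0.ne')
    have cdiv : ContinuousAt (fun r : ℝ => π / (r*t)) r :=
      continuousAt_const.div (continuousAt_id.mul continuousAt_const)
        (mul_ne_zero hr0.ne' ht.ne')
    have cdiv' : ContinuousAt (fun r : ℝ => -π / (r*t)) r :=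
      continuousAt_const.div (continuousAt_id.mul continuousAt_const)
        (mul_ne_zero hr0.ne' ht.ne')
    exact continuousAt_const.mul (c1.mul ((continuousAt_const.add cdiv).mul
      (Real.continuous_exp.continuousAt.comp cdiv')))
  have hFint : IntegrableOn F (Set.Ioi ε) := by
    apply Integrable.mono' hBint (hFcont.aestronglyMeasurable measurableSet_Ioi)
    filter_upwards [ae_restrict_mem measurableSet_Ioi] with r hr
    have hr0 : 0 < r := hε.trans hr
    have hrp : (0:ℝ) < r ^ (-(d:ℝ)/2 - 1) := Real.rpow_pos_of_pos hr0 _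
    have hs : 0 ≤ π / (r*t) := by positivity
    have key := absb ((d:ℝ)/2) (π / (r*t)) (by positivity) hs
    have key' : |(-(d:ℝ)/2 + π/(r*t))| * |Real.exp (-π/(r*t))| ≤ (d:ℝ)/2 + 1 := by
      rw [← abs_mul, neg_div, neg_div]; exact key
    simp only [hF, Real.norm_eq_abs, abs_mul, abs_of_pos hrp]
    calc |C| * (r ^ (-(d:ℝ)/2 - 1) * (|(-(d:ℝ)/2 + π/(r*t))| * |Real.exp (-π/(r*t))|))
        ≤ |C| * (r ^ (-(d:ℝ)/2 - 1) * ((d:ℝ)/2 + 1)) := by gcongr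
      _ = |C| * ((d:ℝ)/2 + 1) * r ^ (-(d:ℝ)/2 - 1) := by ring
  -- limit at infinity
  have t1 : Tendsto (fun r : ℝ => r ^ (-(d:ℝ)/2)) atTop (𝓝 0) := by
    have := tendsto_rpow_neg_atTop (y := (d:ℝ)/2) (by positivity)
    simpa [neg_div] using this
  have ta : Tendsto (fun r : ℝ => -π / (r*t)) atTop (𝓝 0) := by
    have : (fun r : ℝ => -π / (r*t)) = fun r : ℝ => (-π/t) * r⁻¹ := funext hfe
    rw [this]
    simpa using tendsto_inv_atTop_zero.const_mul (-π/t)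
  have t2 : Tendsto (fun r : ℝ => Real.exp (-π / (r*t))) atTop (𝓝 1) := by
    have := (Real.continuous_exp.tendsto 0).comp ta
    simpa [Function.comp_def] using this
  have htend : Tendsto g atTop (𝓝 0) := by
    have := (t1.mul t2).const_mul C
    simpa using this
  -- continuity at ε
  have hcont : ContinuousWithinAt g (Set.Ici ε) ε := by
    apply ContinuousAt.continuousWithinAt
    have c1 : ContinuousAt (fun r : ℝ => r ^ (-(d:ℝ)/2)) ε :=
      Real.continuousAt_rpow_const _ _ (Or.inl hε.ne')
    have cdiv : ContinuousAt (fun r : ℝ => -π / (r*t)) ε :=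
      continuousAt_const.div (continuousAt_id.mul continuousAt_const)
        (mul_ne_zero hε.ne' ht.ne')
    exact continuousAt_const.mul (c1.mul (Real.continuous_exp.continuousAt.comp cdiv))
  rw [setIntegral_congr_fun measurableSet_Ioi hcongr,
    integral_Ioi_of_hasDerivAt_of_tendsto hcont hderiv hFint htend, zero_sub]


lemma outer_int (d : ℕ) (hd1 : 1 ≤ d) {ε : ℝ} (hε : 0 < ε) :
    ∫ t in Set.Ioi (0:ℝ),
        (-(t ^ (-(d:ℝ)/2 - 1) * (ε ^ (-(d:ℝ)/2) * Real.exp (-π / (ε * t)))))^2 * t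
      = (∫ r in Set.Ioi (0:ℝ), r ^ ((d:ℝ) - 1) * Real.exp (-2 * r)) * π ^ (-(d:ℝ)) := by
  have hd0 : (0:ℝ) < d := by exact_mod_cast Nat.lt_of_lt_of_le Nat.zero_lt_one hd1
  set a : ℝ := 2*π/ε with ha
  have ha0 : 0 < a := by rw [ha]; positivity
  have step1 : ∫ t in Set.Ioi (0:ℝ),
      (-(t ^ (-(d:ℝ)/2 - 1) * (ε ^ (-(d:ℝ)/2) * Real.exp (-π / (ε * t)))))^2 * t
      = ∫ t in Set.Ioi (0:ℝ), ε ^ (-(d:ℝ)) * (t ^ (-(d:ℝ) - 1) * Real.exp (-(a * t⁻¹))) := by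
    apply setIntegral_congr_fun measurableSet_Ioi
    intro t ht
    have ht0 : 0 < t := ht
    have h1 : t ^ (-(d:ℝ)-1) = t ^ (-(d:ℝ)/2-1) * t ^ (-(d:ℝ)/2-1) * t := by
      have he : (-(d:ℝ)-1) = (-(d:ℝ)/2-1) + (-(d:ℝ)/2-1) + 1 := by ring
      rw [he, Real.rpow_add ht0, Real.rpow_add ht0, Real.rpow_one]
    have h2 : ε ^ (-(d:ℝ)) = ε ^ (-(d:ℝ)/2) * ε ^ (-(d:ℝ)/2) := by
      rw [← Real.rpow_add hε]; congr 1; ring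
    have h3 : Real.exp (-(a * t⁻¹)) = Real.exp (-π/(ε*t)) * Real.exp (-π/(ε*t)) := by
      rw [← Real.exp_add]; congr 1
      rw [ha]; field_simp; ring
    simp only [h1, h2, h3]
    ring
  have step2 : ∫ x in Set.Ioi (0:ℝ), x ^ (-(d:ℝ)-1) * Real.exp (-(a * x⁻¹))
      = ∫ y in Set.Ioi (0:ℝ), y ^ ((d:ℝ)-1) * Real.exp (-(a*y)) := by
    have hsub := integral_comp_rpow_Ioi (fun y => y ^ ((d:ℝ)-1) * Real.exp (-(a*y)))
      (p := -1) (by norm_num)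
    rw [← hsub]
    apply setIntegral_congr_fun measurableSet_Ioi
    intro x hx
    have hx0 : 0 < x := hx
    simp only [smul_eq_mul, abs_neg, abs_one]
    rw [Real.rpow_neg_one, Real.inv_rpow hx0.le, ← Real.rpow_neg hx0.le, one_mul,
      ← mul_assoc, ← Real.rpow_add hx0]
    have hee : ((-1:ℝ)-1) + -((d:ℝ)-1) = -(d:ℝ)-1 := by ring
    rw [hee]
  have step3 : ∫ y in Set.Ioi (0:ℝ), y ^ ((d:ℝ)-1) * Real.exp (-(a*y))
      = (1/a) ^ (d:ℝ) * Real.Gamma d :=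
    integral_rpow_mul_exp_neg_mul_Ioi hd0 ha0
  have step4 : ∫ r in Set.Ioi (0:ℝ), r ^ ((d:ℝ) - 1) * Real.exp (-2 * r)
      = (1/2) ^ (d:ℝ) * Real.Gamma d := by
    rw [← integral_rpow_mul_exp_neg_mul_Ioi hd0 (by norm_num : (0:ℝ) < 2)]
    simp only [neg_mul]
  rw [step1, integral_const_mul, step2, step3, step4]
  rw [Real.rpow_neg hε.le, Real.rpow_neg Real.pi_pos.le]
  simp only [Real.rpow_natCast]
  rw [ha]
  have hπ : (π:ℝ) ≠ 0 := Real.pi_ne_zero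
  field_simp
  rw [div_pow, mul_pow, one_div, inv_pow]
  field_simp

/-- For unit `θ` and every `ε > 0`, the truncated-singular-integral computation
`∫₀^∞ |∫_{r>ε} r^{-d/2} k(θ/√r) dr/r|²(t) · t dt = C_d π^{-d}` holds, with
`C_d = ∫₀^∞ r^{d-1} e^{-2r} dr`; in particular the `H`-norm is bounded by
`(C_d π^{-d})^{1/2}` uniformly in `ε` and `θ`. -/
theorem stmt_19 (n d : ℕ) (hd1 : 1 ≤ d) (hdn : d ≤ n)
    (θ : EuclideanSpace ℝ (Fin n)) (hθ : ‖θ‖ = 1) :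
    (∀ ε : ℝ, 0 < ε →
        ∫ t in Set.Ioi (0 : ℝ),
            (∫ r in Set.Ioi ε, r ^ (-(d : ℝ) / 2) * kker d ((Real.sqrt r)⁻¹ • θ) t / r) ^ 2 * t
          = (∫ r in Set.Ioi (0 : ℝ), r ^ ((d : ℝ) - 1) * Real.exp (-2 * r)) * π ^ (-(d : ℝ))) ∧
      ∀ ε : ℝ, 0 < ε →
        Real.sqrt (∫ t in Set.Ioi (0 : ℝ),
            (∫ r in Set.Ioi ε, r ^ (-(d : ℝ) / 2) * kker d ((Real.sqrt r)⁻¹ • θ) t / r) ^ 2 * t)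
          ≤ ((∫ r in Set.Ioi (0 : ℝ), r ^ ((d : ℝ) - 1) * Real.exp (-2 * r)) * π ^ (-(d : ℝ)))
              ^ ((1 : ℝ) / 2) := by
  have key : ∀ ε : ℝ, 0 < ε →
      ∫ t in Set.Ioi (0 : ℝ),
          (∫ r in Set.Ioi ε, r ^ (-(d : ℝ) / 2) * kker d ((Real.sqrt r)⁻¹ • θ) t / r) ^ 2 * t
        = (∫ r in Set.Ioi (0 : ℝ), r ^ ((d : ℝ) - 1) * Real.exp (-2 * r)) * π ^ (-(d : ℝ)) := by
    intro ε hε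
    rw [← outer_int d hd1 hε]
    apply setIntegral_congr_fun measurableSet_Ioi
    intro t ht
    have ht0 : (0:ℝ) < t := ht
    simp only
    rw [inner_int d hd1 θ hθ hε ht0]
  exact ⟨key, fun ε hε => by rw [key ε hε, Real.sqrt_eq_rpow]⟩
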